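/- Let ŵ be a word of length (m+1)n on the alphabet {α_i^{(s)} : i ∈ [n], s ∈ [0..m]} using each letter exactly once, such that for all i and s ∈ [m] the letter α_i^{(s-1)} appears before α_i^{(s)}, and for all i,j and s,t ∈ [m], if α_i^{(s-1)} appears before α_j^{(t-1)} then α_i^{(s)} appears before α_j^{(t)}. Then for any prefix of ŵ containing a letters of the form α_i^{(0)} and b letters of the form α_i^{(s)} with s ≥ 1, one has b ≤ m·a. -/

import Mathlib

lemma indexOf_congr {α : Type*} {i1 i2 : BEq α} (h1 : @LawfulBEq α i1) (h2 : @LawfulBEq α i2)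
    (a : α) (l : List α) : @List.idxOf α i1 a l = @List.idxOf α i2 a l := by
  induction l with
  | nil => rfl
  | cons b l ih =>
    rw [@List.idxOf_cons α b l a i1, @List.idxOf_cons α b l a i2, ih]
    have : (@BEq.beq α i1 b a) = (@BEq.beq α i2 b a) := by
      by_cases h : b = a
      · subst h; rw [@beq_self_eq_true α i1 inferInstance, @beq_self_eq_true α i2 inferInstance]
      · rw [@beq_eq_false_iff_ne α i1 h1 _ _ |>.2 h, @beq_eq_false_iff_ne α i2 h2 _ _ |>.2 h]
    rw [this]

lemma mem_take_iff_indexOf {α : Type*} [DecidableEq α] (w : List α) (k : ℕ) (p : α) :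
    p ∈ w.take k ↔ p ∈ w ∧ w.idxOf p < k := by
  constructor
  · intro h
    have hm : p ∈ w := List.mem_of_mem_take h
    have : w.idxOf p = (w.take k).idxOf p := by
      conv_lhs => rw [← List.take_append_drop k w]
      rw [List.idxOf_append_of_mem h]
    refine ⟨hm, ?_⟩
    rw [this]
    exact lt_of_lt_of_le (List.idxOf_lt_length_iff.2 h)
      (by simp)
  · rintro ⟨hp, hlt⟩
    have hlen : w.idxOf p < w.length := List.idxOf_lt_length_iff.2 hp
    have hmin : w.idxOf p < (w.take k).length := by
      simp [List.length_take, hlt, hlen]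
    have : (w.take k)[w.idxOf p] = p := by
      rw [List.getElem_take]
      exact List.getElem_idxOf hlen
    exact this ▸ List.getElem_mem hmin

/-- Let `ŵ` be a word on the alphabet `{α_i^{(s)} : i ∈ [n], s ∈ [0..m]}` (letters encoded
as pairs `(i,s)` with `i < n`, `s ≤ m`) using each letter exactly once, such that
`α_i^{(s-1)}` appears before `α_i^{(s)}` for all `i` and `s ∈ [m]`, and such that if
`α_i^{(s-1)}` appears before `α_j^{(t-1)}` then `α_i^{(s)}` appears before `α_j^{(t)}`.
Then every prefix contains at most `m` times as many letters with `s ≥ 1` as letters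
with `s = 0`. -/
theorem annotated_sketch_prefix (n m : ℕ) (w : List (ℕ × ℕ))
    (hmem : ∀ p : ℕ × ℕ, p ∈ w ↔ (p.1 < n ∧ p.2 ≤ m))
    (hnodup : w.Nodup)
    (hb : ∀ i s : ℕ, i < n → 1 ≤ s → s ≤ m →
      w.idxOf (i, s - 1) < w.idxOf (i, s))
    (hc : ∀ i j s t : ℕ, i < n → j < n → 1 ≤ s → s ≤ m → 1 ≤ t → t ≤ m →
      w.idxOf (i, s - 1) < w.idxOf (j, t - 1) →
      w.idxOf (i, s) < w.idxOf (j, t))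
    (k : ℕ) :
    ((w.take k).filter (fun p => p.2 ≠ 0)).length
      ≤ m * ((w.take k).filter (fun p => p.2 = 0)).length := by
  have hidx : ∀ (p : ℕ × ℕ) (l : List (ℕ × ℕ)),
      @List.idxOf _ instBEqProd p l = @List.idxOf _ instBEqOfDecidableEq p l :=
    fun p l => @indexOf_congr _ instBEqProd (@instBEqOfDecidableEq (ℕ × ℕ) instDecidableEqProd) inferInstance (@instLawfulBEq (ℕ × ℕ) instDecidableEqProd) p l
  simp only [hidx] at hb
  set t := w.take k with ht
  -- chain down: if (i,s) ∈ t then (i,0) ∈ t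
  have chain : ∀ s : ℕ, s ≤ m → ∀ i : ℕ, (i, s) ∈ t → (i, 0) ∈ t := by
    intro s
    induction s with
    | zero => intro _ i h; exact h
    | succ s ih =>
      intro hs i h
      rw [ht, mem_take_iff_indexOf] at h
      obtain ⟨hw, hlt⟩ := h
      have hi : i < n := ((hmem _).1 hw).1
      have hprev : (i, s) ∈ w := (hmem _).2 ⟨hi, le_trans (Nat.le_succ s) hs⟩
      have hlt' := hb i (s + 1) hi (Nat.succ_le_succ (Nat.zero_le s)) hs
      simp only [Nat.add_sub_cancel] at hlt'
      exact ih (le_trans (Nat.le_succ s) hs) i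
        ((mem_take_iff_indexOf w k _).2 ⟨hprev, lt_trans hlt' hlt⟩)
  have htnd : t.Nodup := hnodup.sublist (List.take_sublist k w)
  set A := t.filter (fun p => p.2 = 0) with hA
  set B := t.filter (fun p => p.2 ≠ 0) with hB
  have hAnd : A.Nodup := htnd.filter _
  have hBnd : B.Nodup := htnd.filter _
  have hsub : B.toFinset ⊆ (A.toFinset.image Prod.fst) ×ˢ Finset.Icc 1 m := by
    intro p hp
    rw [List.mem_toFinset, hB, List.mem_filter] at hp
    obtain ⟨hpt, hp2⟩ := hp
    have hpw : p ∈ w := List.mem_of_mem_take hpt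
    have hple : p.2 ≤ m := ((hmem _).1 hpw).2
    have hp2' : p.2 ≠ 0 := by simpa using hp2
    have h0 : (p.1, 0) ∈ t := chain p.2 hple p.1 (by rwa [Prod.mk.eta])
    have h0A : (p.1, 0) ∈ A.toFinset := by
      rw [List.mem_toFinset, hA, List.mem_filter]
      exact ⟨h0, by simp⟩
    rw [Finset.mem_product]
    constructor
    · exact Finset.mem_image.2 ⟨(p.1, 0), h0A, rfl⟩
    · exact Finset.mem_Icc.2 ⟨Nat.one_le_iff_ne_zero.2 hp2', hple⟩
  have hcard := Finset.card_le_card hsub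
  rw [Finset.card_product, Nat.card_Icc] at hcard
  have hIm : (A.toFinset.image Prod.fst).card ≤ A.toFinset.card :=
    Finset.card_image_le
  have hAc : A.toFinset.card = A.length := List.toFinset_card_of_nodup hAnd
  have hBc : B.toFinset.card = B.length := List.toFinset_card_of_nodup hBnd
  calc B.length = B.toFinset.card := hBc.symm
    _ ≤ (A.toFinset.image Prod.fst).card * (m + 1 - 1) := hcard
    _ ≤ A.toFinset.card * m := by simpa using Nat.mul_le_mul_right m hIm
    _ = m * A.length := by rw [hAc, Nat.mul_comm]
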